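/- Let P(x) be a monic polynomial of degree n over an algebraically closed valued field whose valuation has divisible value group G. If s ∈ G is a slope of the Newton polygon of P with multiplicity m, then P has exactly m roots (with multiplicity) of valuation s. -/

import Mathlib

set_option linter.unusedSectionVars false
set_option linter.unusedVariables false
open Polynomial Multiset
namespace NewtonAux
variable {L G : Type*} [Field L] [DecidableEq L] [AddCommGroup G] [LinearOrder G] [IsOrderedAddMonoid G]
variable (v : AddValuation L (WithTop G)) (s : G)



/-- the product of `X - r` over a multiset of roots -/
noncomputable def QQ (T : Multiset L) : Polynomial L :=
  (T.map fun r => Polynomial.X - Polynomial.C r).prod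

lemma QQ_monic (T : Multiset L) : (QQ T).Monic :=
  monic_multiset_prod_of_monic _ _ fun _ _ => monic_X_sub_C _

lemma QQ_natDegree (T : Multiset L) : (QQ T).natDegree = Multiset.card T :=
  natDegree_multiset_prod_X_sub_C_eq_card T

lemma QQ_add (A B : Multiset L) : QQ (A + B) = QQ A * QQ B := by
  simp [QQ, Multiset.map_add]


lemma v_prod (T : Multiset L) : v T.prod = (T.map v).sum := by
  induction T using Multiset.induction_on with
  | empty => simp
  | cons a T ih => simp [ih]

lemma v_msum_le {S : Multiset L} {c d : WithTop G} (h : ∀ x ∈ S, c ≤ v x + d) :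
    c ≤ v S.sum + d := by
  induction S using Multiset.induction_on with
  | empty => simp
  | cons a S ih =>
    rw [Multiset.sum_cons]
    have h1 : c ≤ v a + d := h a (Multiset.mem_cons_self a S)
    have h2 : c ≤ v S.sum + d := ih fun x hx => h x (Multiset.mem_cons_of_mem hx)
    calc c ≤ min (v a + d) (v S.sum + d) := le_min h1 h2
    _ = min (v a) (v S.sum) + d := min_add_add_right _ _ _
    _ ≤ v (a + S.sum) + d := add_le_add_left (v.map_add a S.sum) d

lemma v_msum_lt {S : Multiset L} {c d : WithTop G} (hc : c ≠ ⊤) (h : ∀ x ∈ S, c < v x + d) :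
    c < v S.sum + d := by
  induction S using Multiset.induction_on with
  | empty => simpa using lt_top_iff_ne_top.2 hc
  | cons a S ih =>
    rw [Multiset.sum_cons]
    have h1 : c < v a + d := h a (Multiset.mem_cons_self a S)
    have h2 : c < v S.sum + d := ih fun x hx => h x (Multiset.mem_cons_of_mem hx)
    calc c < min (v a + d) (v S.sum + d) := lt_min h1 h2
    _ = min (v a) (v S.sum) + d := min_add_add_right _ _ _
    _ ≤ v (a + S.sum) + d := add_le_add_left (v.map_add a S.sum) d

lemma v_finsum_eq {ι : Type*} [DecidableEq ι] {t : Finset ι} {f : ι → L} {j : ι} (hj : j ∈ t)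
    (hne : v (f j) ≠ ⊤) (h : ∀ i ∈ t, i ≠ j → v (f j) < v (f i)) :
    v (∑ i ∈ t, f i) = v (f j) := by
  rw [← Finset.add_sum_erase t f hj]
  exact v.map_add_eq_of_lt_left <| v.map_lt_sum hne fun i hi =>
    h i (Finset.mem_of_mem_erase hi) (Finset.ne_of_mem_erase hi)






lemma vsum_le_of_le {T : Multiset L} (h : ∀ r ∈ T, v r ≤ (s : WithTop G)) :
    (T.map v).sum ≤ (Multiset.card T) • (s : WithTop G) := by
  have := Multiset.sum_le_card_nsmul (T.map v) ((s : WithTop G)) (by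
    intro x hx; obtain ⟨r, hr, rfl⟩ := Multiset.mem_map.1 hx; exact h r hr)
  simpa using this

lemma vsum_ne_top {T : Multiset L} (h : ∀ r ∈ T, v r ≤ (s : WithTop G)) :
    (T.map v).sum ≠ ⊤ := by
  refine ne_top_of_le_ne_top ?_ (vsum_le_of_le v s h)
  rw [← WithTop.coe_nsmul]; exact WithTop.coe_ne_top

lemma le_vsum_of_le {T : Multiset L} (h : ∀ r ∈ T, (s : WithTop G) ≤ v r) :
    (Multiset.card T) • (s : WithTop G) ≤ (T.map v).sum := by
  have := Multiset.card_nsmul_le_sum (s := T.map v) (a := ((s : WithTop G))) (by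
    intro x hx; obtain ⟨r, hr, rfl⟩ := Multiset.mem_map.1 hx; exact h r hr)
  simpa using this

lemma vsum_lt_of_lt {T : Multiset L} (hT : T ≠ 0) (h : ∀ r ∈ T, v r < (s : WithTop G)) :
    (T.map v).sum < (Multiset.card T) • (s : WithTop G) := by
  obtain ⟨a, ha⟩ := Multiset.exists_mem_of_ne_zero hT
  obtain ⟨T', rfl⟩ := Multiset.exists_cons_of_mem ha
  rw [Multiset.map_cons, Multiset.sum_cons, Multiset.card_cons, succ_nsmul']
  have h1 : (T'.map v).sum ≤ (Multiset.card T') • (s : WithTop G) :=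
    vsum_le_of_le v s fun r hr => (h r (Multiset.mem_cons_of_mem hr)).le
  calc v a + (T'.map v).sum ≤ v a + (Multiset.card T') • (s : WithTop G) := add_le_add_right h1 _
  _ < (s : WithTop G) + (Multiset.card T') • (s : WithTop G) := by
      refine WithTop.add_lt_add_right ?_ (h a (Multiset.mem_cons_self a T'))
      rw [← WithTop.coe_nsmul]; exact WithTop.coe_ne_top

lemma lt_vsum_of_lt {T : Multiset L} (hT : T ≠ 0) (h : ∀ r ∈ T, (s : WithTop G) < v r) :
    (Multiset.card T) • (s : WithTop G) < (T.map v).sum := by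
  obtain ⟨a, ha⟩ := Multiset.exists_mem_of_ne_zero hT
  obtain ⟨T', rfl⟩ := Multiset.exists_cons_of_mem ha
  rw [Multiset.map_cons, Multiset.sum_cons, Multiset.card_cons, succ_nsmul']
  have h1 : (Multiset.card T') • (s : WithTop G) ≤ (T'.map v).sum :=
    le_vsum_of_le v s fun r hr => (h r (Multiset.mem_cons_of_mem hr)).le
  have h2 : (s : WithTop G) + (Multiset.card T') • (s : WithTop G)
      < v a + (Multiset.card T') • (s : WithTop G) := by
    refine WithTop.add_lt_add_right ?_ (h a (Multiset.mem_cons_self a T'))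
    rw [← WithTop.coe_nsmul]; exact WithTop.coe_ne_top
  exact h2.trans_le (add_le_add_right h1 _)





def mmu (M : Multiset L) : WithTop G := (M.map fun r => min (v r) (s : WithTop G)).sum

lemma mmu_ne_top (M : Multiset L) : mmu v s M ≠ ⊤ := by
  refine ne_top_of_le_ne_top (b := (Multiset.card M) • (s : WithTop G)) ?_ ?_
  · rw [← WithTop.coe_nsmul]; exact WithTop.coe_ne_top
  · have := Multiset.sum_le_card_nsmul (M.map fun r => min (v r) (s : WithTop G))
      ((s : WithTop G)) (by simp)
    simpa [mmu] using this

lemma lowA {T M : Multiset L} (hTM : T ≤ M) :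
    mmu v s M ≤ (T.map v).sum + (Multiset.card (M - T)) • (s : WithTop G) := by
  conv_lhs => rw [mmu, ← tsub_add_cancel_of_le hTM]
  rw [Multiset.map_add, Multiset.sum_add, add_comm]
  refine add_le_add (Multiset.sum_map_le_sum_map _ _ fun r _ => min_le_left _ _) ?_
  have := Multiset.sum_le_card_nsmul ((M - T).map fun r => min (v r) (s : WithTop G))
    ((s : WithTop G)) (by simp)
  simpa using this

lemma mmu_cons (a : L) (M : Multiset L) :
    mmu v s (a ::ₘ M) = min (v a) (s : WithTop G) + mmu v s M := by
  simp [mmu]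

lemma lowB1 {T M : Multiset L} (hTM : T ≤ M) {r0 : L} (h0 : r0 ∈ T)
    (hs : (s : WithTop G) < v r0) :
    mmu v s M < (T.map v).sum + (Multiset.card (M - T)) • (s : WithTop G) := by
  obtain ⟨T', rfl⟩ := Multiset.exists_cons_of_mem h0
  obtain ⟨M2, rfl⟩ := Multiset.exists_cons_of_mem
    (Multiset.mem_of_le hTM (Multiset.mem_cons_self r0 T'))
  have hTM2 : T' ≤ M2 := (Multiset.cons_le_cons_iff r0).1 hTM
  have hsub : (r0 ::ₘ M2) - (r0 ::ₘ T') = M2 - T' := by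
    rw [Multiset.sub_cons, Multiset.erase_cons_head]
  rw [hsub, Multiset.map_cons, Multiset.sum_cons, mmu_cons, add_assoc]
  have h1 : min (v r0) (s : WithTop G) + mmu v s M2 < v r0 + mmu v s M2 := by
    refine WithTop.add_lt_add_right (mmu_ne_top v s M2) ?_
    rw [min_eq_right hs.le]; exact hs
  exact h1.trans_le (add_le_add_right (lowA v s hTM2) _)

lemma lowB2 {T M : Multiset L} (hTM : T ≤ M) {r0 : L} (h0 : r0 ∈ M - T)
    (hs : v r0 < (s : WithTop G)) :
    mmu v s M < (T.map v).sum + (Multiset.card (M - T)) • (s : WithTop G) := by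
  have hr0M : r0 ∈ M := Multiset.mem_of_le (Multiset.sub_le_self M T) h0
  have hT' : T ≤ M.erase r0 := by
    rw [Multiset.le_iff_count]
    intro a
    by_cases ha : a = r0
    · subst ha
      have hc : 0 < Multiset.count a (M - T) := Multiset.count_pos.2 h0
      rw [Multiset.count_sub] at hc
      rw [Multiset.count_erase_self]
      have := Multiset.le_iff_count.1 hTM a
      omega
    · rw [Multiset.count_erase_of_ne ha]
      exact Multiset.le_iff_count.1 hTM a
  have hcard : Multiset.card (M - T) = Multiset.card (M.erase r0 - T) + 1 := by
    rw [Multiset.card_sub hTM, Multiset.card_sub hT', Multiset.card_erase_of_mem hr0M]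
    have h1 : Multiset.card T ≤ Multiset.card (M.erase r0) := Multiset.card_le_card hT'
    rw [Multiset.card_erase_of_mem hr0M] at h1
    simp only [Nat.pred_eq_sub_one] at h1 ⊢
    have h2 : 0 < Multiset.card M := Multiset.card_pos_iff_exists_mem.2 ⟨r0, hr0M⟩
    omega
  have hM : M = r0 ::ₘ M.erase r0 := (Multiset.cons_erase hr0M).symm
  have hmmu : mmu v s M = v r0 + mmu v s (M.erase r0) := by
    conv_lhs => rw [hM]
    rw [mmu_cons, min_eq_left hs.le]
  rw [hmmu, hcard, succ_nsmul, ← add_assoc]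
  have h1 : v r0 + mmu v s (M.erase r0) < (s : WithTop G) + mmu v s (M.erase r0) :=
    WithTop.add_lt_add_right (mmu_ne_top v s (M.erase r0)) hs
  refine h1.trans_le ?_
  calc (s : WithTop G) + mmu v s (M.erase r0)
      ≤ (s : WithTop G) + ((T.map v).sum + (Multiset.card (M.erase r0 - T)) • (s : WithTop G)) :=
        add_le_add_right (lowA v s hT') _
  _ = (T.map v).sum + (Multiset.card (M.erase r0 - T)) • (s : WithTop G) + (s : WithTop G) := by
        rw [add_comm]


lemma v_QQ_coeff_eq_esymm {M : Multiset L} {i : ℕ} (hi : i ≤ Multiset.card M) :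
    v ((QQ M).coeff i) = v (M.esymm (Multiset.card M - i)) := by
  rw [QQ, Multiset.prod_X_sub_C_coeff M hi, v.map_mul]
  rcases neg_one_pow_eq_or L (Multiset.card M - i) with h | h <;> rw [h]
  · simp
  · rw [show ((-1 : L)) = -(1:L) by ring, v.map_neg, v.map_one, zero_add]

lemma v_coeff_le {M : Multiset L} {i : ℕ} (hi : i ≤ Multiset.card M) {c d : WithTop G}
    (h : ∀ T ∈ Multiset.powersetCard (Multiset.card M - i) M, c ≤ (T.map v).sum + d) :
    c ≤ v ((QQ M).coeff i) + d := by
  rw [v_QQ_coeff_eq_esymm v hi, Multiset.esymm]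
  refine v_msum_le v ?_
  intro x hx
  obtain ⟨T, hT, rfl⟩ := Multiset.mem_map.1 hx
  rw [v_prod]
  exact h T hT

lemma v_coeff_lt {M : Multiset L} {i : ℕ} (hi : i ≤ Multiset.card M) {c d : WithTop G}
    (hc : c ≠ ⊤)
    (h : ∀ T ∈ Multiset.powersetCard (Multiset.card M - i) M, c < (T.map v).sum + d) :
    c < v ((QQ M).coeff i) + d := by
  rw [v_QQ_coeff_eq_esymm v hi, Multiset.esymm]
  refine v_msum_lt v hc ?_
  intro x hx
  obtain ⟨T, hT, rfl⟩ := Multiset.mem_map.1 hx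
  rw [v_prod]
  exact h T hT

lemma v_coeff_zero (T : Multiset L) : v ((QQ T).coeff 0) = (T.map v).sum := by
  rw [Polynomial.coeff_zero_eq_eval_zero, QQ, Polynomial.eval_multiset_prod, Multiset.map_map,
    v_prod, Multiset.map_map]
  congr 1
  apply Multiset.map_congr rfl
  intro r hr
  simp

lemma key1 {A B : Multiset L} (hA : ∀ r ∈ A, v r < (s : WithTop G))
    (hB : ∀ r ∈ B, (s : WithTop G) ≤ v r) :
    v ((QQ A * QQ B).coeff (Multiset.card B)) = (A.map v).sum := by
  have hAne : (A.map v).sum ≠ ⊤ := vsum_ne_top v s fun r hr => (hA r hr).le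
  have hone : (QQ B).coeff (Multiset.card B) = 1 := by
    have := (QQ_monic B).coeff_natDegree
    rwa [QQ_natDegree] at this
  have hfj : v ((QQ A).coeff (0, Multiset.card B).1 * (QQ B).coeff (0, Multiset.card B).2)
      = (A.map v).sum := by
    rw [hone, mul_one, v_coeff_zero]
  have hj : ((0 : ℕ), Multiset.card B) ∈ Finset.HasAntidiagonal.antidiagonal (Multiset.card B) := by simp
  rw [Polynomial.coeff_mul, v_finsum_eq v hj (by rw [hfj]; exact hAne) ?_, hfj]
  intro x hx hne
  rw [hfj, v.map_mul]
  have hsum : x.1 + x.2 = Multiset.card B := Finset.HasAntidiagonal.mem_antidiagonal.1 hx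
  have hx1 : x.1 ≠ 0 := by
    intro h
    exact hne (Prod.ext h (by omega))
  by_cases hcase : Multiset.card A < x.1
  · have hz : (QQ A).coeff x.1 = 0 :=
      Polynomial.coeff_eq_zero_of_natDegree_lt (by rwa [QQ_natDegree])
    rw [hz, v.map_zero, top_add]
    exact lt_top_iff_ne_top.2 hAne
  · push_neg at hcase
    have h1 : (A.map v).sum < v ((QQ A).coeff x.1) + x.1 • (s : WithTop G) := by
      refine v_coeff_lt v hcase hAne ?_
      intro T hT
      obtain ⟨hTA, hcard⟩ := Multiset.mem_powersetCard.1 hT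
      have hsplit : (A.map v).sum = (T.map v).sum + ((A - T).map v).sum := by
        conv_lhs => rw [← tsub_add_cancel_of_le hTA]
        rw [Multiset.map_add, Multiset.sum_add, add_comm]
      have hcardAT : Multiset.card (A - T) = x.1 := by
        rw [Multiset.card_sub hTA, hcard]; omega
      have hne0 : A - T ≠ 0 := by
        intro h0; rw [h0] at hcardAT; simp at hcardAT; exact hx1 hcardAT.symm
      have h2 : ((A - T).map v).sum < x.1 • (s : WithTop G) := by
        rw [← hcardAT]
        exact vsum_lt_of_lt v s hne0 fun r hr =>
          hA r (Multiset.mem_of_le (Multiset.sub_le_self A T) hr)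
      rw [hsplit]
      refine WithTop.add_lt_add_left ?_ h2
      exact vsum_ne_top v s fun r hr => (hA r (Multiset.mem_of_le hTA hr)).le
    have h2 : x.1 • (s : WithTop G) ≤ v ((QQ B).coeff x.2) := by
      have hx2 : x.2 ≤ Multiset.card B := by omega
      have hh : ∀ T ∈ Multiset.powersetCard (Multiset.card B - x.2) B,
          x.1 • (s : WithTop G) ≤ (T.map v).sum + 0 := by
        intro T hT
        obtain ⟨hTB, hcard⟩ := Multiset.mem_powersetCard.1 hT
        have hcT : Multiset.card T = x.1 := by rw [hcard]; omega
        rw [add_zero, ← hcT]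
        exact le_vsum_of_le v s fun r hr => hB r (Multiset.mem_of_le hTB hr)
      have := v_coeff_le v hx2 hh
      simpa using this
    exact h1.trans_le (add_le_add_right h2 _)

lemma key2 {A B : Multiset L} (hA : ∀ r ∈ A, v r ≤ (s : WithTop G))
    (hB : ∀ r ∈ B, (s : WithTop G) < v r) :
    v ((QQ A * QQ B).coeff (Multiset.card B)) = (A.map v).sum := by
  have hAne : (A.map v).sum ≠ ⊤ := vsum_ne_top v s hA
  have hone : (QQ B).coeff (Multiset.card B) = 1 := by
    have := (QQ_monic B).coeff_natDegree
    rwa [QQ_natDegree] at this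
  have hfj : v ((QQ A).coeff (0, Multiset.card B).1 * (QQ B).coeff (0, Multiset.card B).2)
      = (A.map v).sum := by
    rw [hone, mul_one, v_coeff_zero]
  have hj : ((0 : ℕ), Multiset.card B) ∈ Finset.HasAntidiagonal.antidiagonal (Multiset.card B) := by simp
  rw [Polynomial.coeff_mul, v_finsum_eq v hj (by rw [hfj]; exact hAne) ?_, hfj]
  intro x hx hne
  rw [hfj, v.map_mul]
  have hsum : x.1 + x.2 = Multiset.card B := Finset.HasAntidiagonal.mem_antidiagonal.1 hx
  have hx1 : x.1 ≠ 0 := by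
    intro h
    exact hne (Prod.ext h (by omega))
  by_cases hcase : Multiset.card A < x.1
  · have hz : (QQ A).coeff x.1 = 0 :=
      Polynomial.coeff_eq_zero_of_natDegree_lt (by rwa [QQ_natDegree])
    rw [hz, v.map_zero, top_add]
    exact lt_top_iff_ne_top.2 hAne
  · push_neg at hcase
    have h1 : (A.map v).sum ≤ v ((QQ A).coeff x.1) + x.1 • (s : WithTop G) := by
      refine v_coeff_le v hcase ?_
      intro T hT
      obtain ⟨hTA, hcard⟩ := Multiset.mem_powersetCard.1 hT
      have hsplit : (A.map v).sum = (T.map v).sum + ((A - T).map v).sum := by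
        conv_lhs => rw [← tsub_add_cancel_of_le hTA]
        rw [Multiset.map_add, Multiset.sum_add, add_comm]
      have hcardAT : Multiset.card (A - T) = x.1 := by
        rw [Multiset.card_sub hTA, hcard]; omega
      have h2 : ((A - T).map v).sum ≤ x.1 • (s : WithTop G) := by
        rw [← hcardAT]
        exact vsum_le_of_le v s fun r hr =>
          hA r (Multiset.mem_of_le (Multiset.sub_le_self A T) hr)
      rw [hsplit]
      exact add_le_add_right h2 _
    have h2 : x.1 • (s : WithTop G) < v ((QQ B).coeff x.2) := by
      have hx2 : x.2 ≤ Multiset.card B := by omega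
      have hctop : x.1 • (s : WithTop G) ≠ ⊤ := by
        rw [← WithTop.coe_nsmul]; exact WithTop.coe_ne_top
      have hh : ∀ T ∈ Multiset.powersetCard (Multiset.card B - x.2) B,
          x.1 • (s : WithTop G) < (T.map v).sum + 0 := by
        intro T hT
        obtain ⟨hTB, hcard⟩ := Multiset.mem_powersetCard.1 hT
        have hcT : Multiset.card T = x.1 := by rw [hcard]; omega
        have hne0 : T ≠ 0 := by
          intro h0; rw [h0] at hcT; simp at hcT; exact hx1 hcT.symm
        rw [add_zero, ← hcT]
        exact lt_vsum_of_lt v s hne0 fun r hr => hB r (Multiset.mem_of_le hTB hr)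
      have := v_coeff_lt v hx2 hctop hh
      simpa using this
    by_cases htop : v ((QQ A).coeff x.1) = ⊤
    · rw [htop, top_add]
      exact lt_top_iff_ne_top.2 hAne
    · exact h1.trans_lt (WithTop.add_lt_add_left htop h2)

lemma key3 {M : Multiset L} {j : ℕ} (hj : j ≤ Multiset.card M) :
    mmu v s M ≤ v ((QQ M).coeff j) + j • (s : WithTop G) := by
  refine v_coeff_le v hj ?_
  intro T hT
  obtain ⟨hTM, hcard⟩ := Multiset.mem_powersetCard.1 hT
  have hc : Multiset.card (M - T) = j := by rw [Multiset.card_sub hTM, hcard]; omega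
  rw [← hc]
  exact lowA v s hTM

lemma key4 {M : Multiset L} {j : ℕ} (hj : j ≤ Multiset.card M)
    (h : ∀ T ≤ M, Multiset.card T = Multiset.card M - j →
      ∃ r0 ∈ T, (s : WithTop G) < v r0) :
    mmu v s M < v ((QQ M).coeff j) + j • (s : WithTop G) := by
  refine v_coeff_lt v hj (mmu_ne_top v s M) ?_
  intro T hT
  obtain ⟨hTM, hcard⟩ := Multiset.mem_powersetCard.1 hT
  obtain ⟨r0, hr0T, hr0⟩ := h T hTM hcard
  have hc : Multiset.card (M - T) = j := by rw [Multiset.card_sub hTM, hcard]; omega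
  rw [← hc]
  exact lowB1 v s hTM hr0T hr0

lemma key5 {M : Multiset L} {j : ℕ} (hj : j ≤ Multiset.card M)
    (h : ∀ T ≤ M, Multiset.card T = Multiset.card M - j →
      ∃ r0 ∈ M - T, v r0 < (s : WithTop G)) :
    mmu v s M < v ((QQ M).coeff j) + j • (s : WithTop G) := by
  refine v_coeff_lt v hj (mmu_ne_top v s M) ?_
  intro T hT
  obtain ⟨hTM, hcard⟩ := Multiset.mem_powersetCard.1 hT
  obtain ⟨r0, hr0T, hr0⟩ := h T hTM hcard
  have hc : Multiset.card (M - T) = j := by rw [Multiset.card_sub hTM, hcard]; omega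
  rw [← hc]
  exact lowB2 v s hTM hr0T hr0

lemma mmu_add (A B : Multiset L) : mmu v s (A + B) = mmu v s A + mmu v s B := by
  simp [mmu]

lemma mmu_of_lt {A : Multiset L} (hA : ∀ r ∈ A, v r < (s : WithTop G)) :
    mmu v s A = (A.map v).sum := by
  unfold mmu
  congr 1
  exact Multiset.map_congr rfl fun r hr => min_eq_left (hA r hr).le

lemma mmu_of_ge {A : Multiset L} (hA : ∀ r ∈ A, (s : WithTop G) ≤ v r) :
    mmu v s A = (Multiset.card A) • (s : WithTop G) := by
  unfold mmu
  rw [show A.map (fun r => min (v r) (s : WithTop G)) = A.map (fun _ => (s : WithTop G)) from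
    Multiset.map_congr rfl fun r hr => min_eq_right (hA r hr)]
  simp

end NewtonAux

open NewtonAux

/-- Newton polygons compute valuations of roots: let `P` be a monic polynomial of
degree `n` over an algebraically closed valued field `L` with divisible value group `G`,
and `s ∈ G`.  Writing `w j = v(P_j) + j • s` (where `P_j` is the coefficient of `x^j`),
let `jmin` and `jmax` be the least and greatest indices `j ≤ n` at which `w` attains its
minimum.  Then the multiplicity of `s` as a slope of the Newton polygon of `P` is
`jmax - jmin`, and `P` has exactly `jmax - jmin` roots (with multiplicity) of
valuation `s`. -/
theorem newton_polygon_roots_of_slope {L G : Type*} [Field L] [IsAlgClosed L]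
    [AddCommGroup G] [LinearOrder G] [IsOrderedAddMonoid G]
    (v : AddValuation L (WithTop G))
    (hdiv : ∀ (g : G) (n : ℕ), 0 < n → ∃ h : G, n • h = g)
    (P : Polynomial L) (hP : P.Monic) (s : G)
    (w : ℕ → WithTop G)
    (hw : ∀ j, w j = v (P.coeff j) + ((j • s : G) : WithTop G))
    (jmin jmax : ℕ) (hminle : jmin ≤ P.natDegree) (hmaxle : jmax ≤ P.natDegree)
    (hmin : ∀ j ≤ P.natDegree, w jmin ≤ w j)
    (hmaxmin : w jmax = w jmin)
    (hleast : ∀ j ≤ P.natDegree, w j = w jmin → jmin ≤ j)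
    (hgreatest : ∀ j ≤ P.natDegree, w j = w jmin → j ≤ jmax) :
    (P.roots.filter fun r => v r = (s : WithTop G)).card = jmax - jmin := by
  letI : DecidableEq L := Classical.decEq L
  set M := P.roots with hM
  have hsp : P = (M.map fun r => X - C r).prod :=
    (IsAlgClosed.splits P).eq_prod_roots_of_monic hP
  have hPQ : P = NewtonAux.QQ M := hsp
  have hn : P.natDegree = Multiset.card M := by
    conv_lhs => rw [hPQ]
    exact NewtonAux.QQ_natDegree M
  set Mlt := M.filter (fun r => v r < (s : WithTop G)) with hMlt
  set Meq := M.filter (fun r => v r = (s : WithTop G)) with hMeq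
  set Mgt := M.filter (fun r => (s : WithTop G) < v r) with hMgt
  have hfle : Mlt + Meq = M.filter (fun r => v r ≤ (s : WithTop G)) := by
    rw [hMlt, hMeq, Multiset.filter_add_filter]
    have h1 : M.filter (fun a => v a < (s : WithTop G) ∨ v a = (s : WithTop G))
        = M.filter (fun r => v r ≤ (s : WithTop G)) :=
      Multiset.filter_congr fun x _ => le_iff_lt_or_eq.symm
    have h2 : M.filter (fun a => v a < (s : WithTop G) ∧ v a = (s : WithTop G)) = 0 :=
      Multiset.filter_eq_nil.2 fun a _ h => absurd h.1 (by rw [h.2]; exact lt_irrefl _)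
    rw [h1, h2, add_zero]
  have hgt' : M.filter (fun r => ¬ (v r ≤ (s : WithTop G))) = Mgt :=
    Multiset.filter_congr fun x _ => not_le
  have hpart : Mlt + Meq + Mgt = M := by
    rw [hfle, ← hgt']
    exact Multiset.filter_add_not _ M
  have hmemlt : ∀ r ∈ Mlt, v r < (s : WithTop G) := fun r hr => (Multiset.mem_filter.1 hr).2
  have hmemeq : ∀ r ∈ Meq, v r = (s : WithTop G) := fun r hr => (Multiset.mem_filter.1 hr).2
  have hmemgt : ∀ r ∈ Mgt, (s : WithTop G) < v r := fun r hr => (Multiset.mem_filter.1 hr).2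
  have hcards : Multiset.card Mlt + Multiset.card Meq + Multiset.card Mgt = Multiset.card M := by
    rw [← hpart]; simp
  set σ := (Mlt.map v).sum with hσ
  set Bc := Multiset.card Meq with hBc
  set Dc := Multiset.card Mgt with hDc
  have hτ : ((Mlt + Meq).map v).sum = σ + Bc • (s : WithTop G) := by
    rw [Multiset.map_add, Multiset.sum_add]
    congr 1
    rw [show Meq.map v = Meq.map (fun _ => (s : WithTop G)) from
      Multiset.map_congr rfl fun r hr => hmemeq r hr]
    simp [hBc]
  have hmmu : NewtonAux.mmu v s M = σ + Bc • (s : WithTop G) + Dc • (s : WithTop G) := by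
    rw [← hpart, NewtonAux.mmu_add, NewtonAux.mmu_add, NewtonAux.mmu_of_lt v s hmemlt,
      NewtonAux.mmu_of_ge v s (fun r hr => (hmemeq r hr).ge),
      NewtonAux.mmu_of_ge v s (fun r hr => (hmemgt r hr).le)]
  have hE2 : v (P.coeff Dc) = σ + Bc • (s : WithTop G) := by
    have hkey := NewtonAux.key2 v s (A := Mlt + Meq) (B := Mgt)
      (fun r hr => by
        rcases Multiset.mem_add.1 hr with h | h
        · exact (hmemlt r h).le
        · exact (hmemeq r h).le)
      hmemgt
    calc v (P.coeff Dc) = v ((QQ (Mlt + Meq) * QQ Mgt).coeff (Multiset.card Mgt)) := by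
          rw [hPQ, ← hpart, NewtonAux.QQ_add]
    _ = ((Mlt + Meq).map v).sum := hkey
    _ = σ + Bc • (s : WithTop G) := hτ
  have hE1 : v (P.coeff (Bc + Dc)) = σ := by
    have hkey := NewtonAux.key1 v s (A := Mlt) (B := Meq + Mgt) hmemlt
      (fun r hr => by
        rcases Multiset.mem_add.1 hr with h | h
        · exact (hmemeq r h).ge
        · exact (hmemgt r h).le)
    have hcard2 : Multiset.card (Meq + Mgt) = Bc + Dc := by simp [hBc, hDc]
    calc v (P.coeff (Bc + Dc)) = v ((QQ Mlt * QQ (Meq + Mgt)).coeff (Multiset.card (Meq + Mgt))) := by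
          rw [hPQ, ← hpart, add_assoc, NewtonAux.QQ_add, hcard2]
    _ = (Mlt.map v).sum := hkey
    _ = σ := rfl
  have hw' : ∀ j, w j = v (P.coeff j) + j • (s : WithTop G) := fun j => by
    rw [hw j, WithTop.coe_nsmul]
  set μ := σ + Bc • (s : WithTop G) + Dc • (s : WithTop G) with hμ
  have hwDc : w Dc = μ := by rw [hw' Dc, hE2, hμ]
  have hwBD : w (Bc + Dc) = μ := by rw [hw' _, hE1, hμ, add_nsmul, ← add_assoc]
  have hlow : ∀ j ≤ P.natDegree, μ ≤ w j := by
    intro j hj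
    rw [hw' j, hPQ, ← hmmu]
    exact NewtonAux.key3 v s (hn ▸ hj)
  have hstrict1 : ∀ j ≤ P.natDegree, j < Dc → μ < w j := by
    intro j hj hjD
    rw [hw' j, hPQ, ← hmmu]
    refine NewtonAux.key4 v s (hn ▸ hj) ?_
    intro T hTM hcT
    by_contra hcon
    push_neg at hcon
    have hTle : T ≤ M.filter (fun r => v r ≤ (s : WithTop G)) :=
      Multiset.le_filter.2 ⟨hTM, hcon⟩
    have hcle := Multiset.card_le_card hTle
    rw [← hfle] at hcle
    simp only [Multiset.card_add] at hcle
    rw [hcT] at hcle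
    rw [hn] at hj
    omega
  have hstrict2 : ∀ j ≤ P.natDegree, Bc + Dc < j → μ < w j := by
    intro j hj hjD
    rw [hw' j, hPQ, ← hmmu]
    refine NewtonAux.key5 v s (hn ▸ hj) ?_
    intro T hTM hcT
    by_contra hcon
    push_neg at hcon
    have hTle : M - T ≤ M.filter (fun r => ¬ (v r < (s : WithTop G))) :=
      Multiset.le_filter.2 ⟨Multiset.sub_le_self M T, fun r hr => not_lt.2 (hcon r hr)⟩
    have hcle := Multiset.card_le_card hTle
    have hcfilter : Multiset.card (M.filter (fun r => ¬ (v r < (s : WithTop G))))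
        = Bc + Dc := by
      have := Multiset.filter_add_not (fun r => v r < (s : WithTop G)) M
      have hc2 := congrArg Multiset.card this
      simp only [Multiset.card_add] at hc2
      rw [← hMlt] at hc2
      omega
    rw [hcfilter, Multiset.card_sub hTM, hcT] at hcle
    rw [hn] at hj
    omega
  have hDn : Dc ≤ P.natDegree := by rw [hn]; omega
  have hBDn : Bc + Dc ≤ P.natDegree := by rw [hn]; omega
  have h1 : w jmin = μ := le_antisymm ((hmin Dc hDn).trans hwDc.le) (hlow jmin hminle)
  have h2 : jmin ≤ Dc := hleast Dc hDn (hwDc.trans h1.symm)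
  have h3 : ¬ jmin < Dc := fun hlt => absurd (hstrict1 jmin hminle hlt) (by rw [h1]; exact lt_irrefl μ)
  have h4 : Bc + Dc ≤ jmax := hgreatest _ hBDn (hwBD.trans h1.symm)
  have h5 : ¬ Bc + Dc < jmax := fun hlt =>
    absurd (hstrict2 jmax hmaxle hlt) (by rw [hmaxmin, h1]; exact lt_irrefl μ)
  show Multiset.card Meq = jmax - jmin
  omega
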